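/- Suppose n workers answer m questions, with n_ex ≥ 2 experts who independently give the correct answer to each question with probability p_ex > 1/s (and a uniform wrong answer otherwise) and n - n_ex non-experts who answer each question uniformly at random among s candidates, all independently. Define the expert core W* as the subset of workers maximizing min_{u∈W} Σ_{v∈W\{u}} γ(u,v), where γ(u,v) = -log Σ_{i=τ(u,v)}^m C(m,i) p^i (1-p)^{m-i}, τ(u,v) is the number of questions on which u and v agree, and p is the empirical average pairwise agreement rate. If m ≥ 2n⁴·log(n²/ε)/(p_ex - 1/s)⁴ for some ε ∈ (0,1], then with probability at least 1 - ε the expert core contains only experts. -/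

import Mathlib

private lemma hoeffding_aux (p : ℝ) (hp0 : 0 ≤ p) (hp1 : p ≤ 1) (x : ℝ) :
    1 - p + p * Real.exp x ≤ Real.exp (p * x + x ^ 2 / 8) := by
  set D : ℝ → ℝ := fun y => 1 - p + p * Real.exp y with hD
  have hDpos : ∀ y, 0 < D y := by
    intro y
    rcases eq_or_lt_of_le hp0 with h | h
    · simp [hD, ← h]
    · have h1 := Real.exp_pos y
      have h2 : 0 < p * Real.exp y := by positivity
      simp only [hD]; nlinarith
  set g : ℝ → ℝ := fun y => p * y + y ^ 2 / 8 - Real.log (D y) with hg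
  set g' : ℝ → ℝ := fun y => p + y / 4 - p * Real.exp y / D y with hg'
  have hDer : ∀ y, HasDerivAt g (g' y) y := by
    intro y
    have h1 : HasDerivAt D (p * Real.exp y) y := by
      exact ((Real.hasDerivAt_exp y).const_mul p).const_add (1 - p)
    have h2 : HasDerivAt (fun y => Real.log (D y)) (p * Real.exp y / D y) y :=
      h1.log (hDpos y).ne'
    have h3 : HasDerivAt (fun y : ℝ => p * y + y ^ 2 / 8) (p + y / 4) y := by
      have h4 : HasDerivAt (fun y : ℝ => p * y) p y := by
        simpa using (hasDerivAt_id y).const_mul p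
      have h5 : HasDerivAt (fun y : ℝ => y ^ 2 / 8) (2 * y ^ 1 / 8) y :=
        (hasDerivAt_pow 2 y).div_const 8
      have h6 : HasDerivAt (fun y : ℝ => y ^ 2 / 8) (y / 4) y := by
        convert h5 using 1; ring
      exact h4.add h6
    exact h3.sub h2
  have hDer' : ∀ y, HasDerivAt g' (1 / 4 - (1 - p) * (p * Real.exp y) / (D y) ^ 2) y := by
    intro y
    have h1 : HasDerivAt D (p * Real.exp y) y := by
      exact ((Real.hasDerivAt_exp y).const_mul p).const_add (1 - p)
    have h2 : HasDerivAt (fun y => p * Real.exp y) (p * Real.exp y) y :=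
      (Real.hasDerivAt_exp y).const_mul p
    have h3 : HasDerivAt (fun y => p * Real.exp y / D y)
        ((p * Real.exp y * D y - p * Real.exp y * (p * Real.exp y)) / (D y) ^ 2) y :=
      h2.div h1 (hDpos y).ne'
    have h4 : HasDerivAt (fun y : ℝ => p + y / 4) (1 / 4) y := by
      simpa using ((hasDerivAt_id y).div_const 4).const_add p
    have h5 := h4.sub h3
    refine h5.congr_deriv ?_
    have hDy := (hDpos y).ne'
    have hDexpand : D y = 1 - p + p * Real.exp y := rfl
    rw [hDexpand]
    ring
  have hg'0 : g' 0 = 0 := by simp [hg', hD]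
  have hg'mono : Monotone g' := by
    apply monotone_of_deriv_nonneg
    · exact fun y => (hDer' y).differentiableAt
    · intro y
      rw [(hDer' y).deriv]
      have hA : 0 ≤ 1 - p := by linarith
      have hB : 0 ≤ p * Real.exp y := by positivity
      have hDy : D y = (1 - p) + p * Real.exp y := rfl
      have h2 : (1 - p) * (p * Real.exp y) / (D y) ^ 2 ≤ 1 / 4 := by
        rw [div_le_div_iff₀ (pow_pos (hDpos y) 2) (by norm_num)]
        rw [hDy]
        nlinarith [sq_nonneg ((1 - p) - p * Real.exp y)]
      linarith
  have hgcont : Continuous g :=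
    continuous_iff_continuousAt.2 fun y => (hDer y).differentiableAt.continuousAt
  have hg0 : g 0 = 0 := by simp [hg, hD]
  have key : ∀ y, 0 ≤ g y := by
    intro y
    rcases le_total 0 y with hy | hy
    · have hmono : MonotoneOn g (Set.Icc 0 y) := by
        apply monotoneOn_of_deriv_nonneg (convex_Icc 0 y) hgcont.continuousOn
        · intro z _
          exact (hDer z).differentiableAt.differentiableWithinAt
        · intro z hz
          rw [interior_Icc] at hz
          rw [(hDer z).deriv]
          calc (0:ℝ) = g' 0 := hg'0.symm
          _ ≤ g' z := hg'mono (le_of_lt hz.1)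
      have := hmono (Set.left_mem_Icc.2 hy) (Set.right_mem_Icc.2 hy) hy
      rw [hg0] at this; exact this
    · have hmono : AntitoneOn g (Set.Icc y 0) := by
        apply antitoneOn_of_deriv_nonpos (convex_Icc y 0) hgcont.continuousOn
        · intro z _
          exact (hDer z).differentiableAt.differentiableWithinAt
        · intro z hz
          rw [interior_Icc] at hz
          rw [(hDer z).deriv]
          calc g' z ≤ g' 0 := hg'mono (le_of_lt hz.2)
          _ = 0 := hg'0
      have := hmono (Set.left_mem_Icc.2 hy) (Set.right_mem_Icc.2 hy) hy
      rw [hg0] at this; exact this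
  have hy := key x
  have hlog : Real.log (D x) ≤ p * x + x ^ 2 / 8 := by
    simp only [hg] at hy; linarith
  calc D x = Real.exp (Real.log (D x)) := (Real.exp_log (hDpos x)).symm
  _ ≤ Real.exp (p * x + x ^ 2 / 8) := Real.exp_le_exp.2 hlog

private lemma binom_mgf (p r : ℝ) (m : ℕ) :
    ∑ i ∈ Finset.range (m + 1), (m.choose i : ℝ) * p ^ i * (1 - p) ^ (m - i) * r ^ i
      = (1 - p + p * r) ^ m := by
  have h := add_pow (p * r) (1 - p) m
  calc ∑ i ∈ Finset.range (m + 1), (m.choose i : ℝ) * p ^ i * (1 - p) ^ (m - i) * r ^ i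
      = ∑ i ∈ Finset.range (m + 1), (p * r) ^ i * (1 - p) ^ (m - i) * (m.choose i : ℝ) := by
        apply Finset.sum_congr rfl; intro i _; rw [mul_pow]; ring
  _ = (p * r + (1 - p)) ^ m := h.symm
  _ = (1 - p + p * r) ^ m := by ring_nf

private lemma sum_bin_eq_one (p : ℝ) (m : ℕ) :
    ∑ i ∈ Finset.range (m + 1), (m.choose i : ℝ) * p ^ i * (1 - p) ^ (m - i) = 1 := by
  have h := binom_mgf p 1 m
  simp only [one_pow, mul_one] at h
  rw [h]; norm_num

private lemma bin_nonneg {p : ℝ} (hp0 : 0 ≤ p) (hp1 : p ≤ 1) (m i : ℕ) :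
    0 ≤ (m.choose i : ℝ) * p ^ i * (1 - p) ^ (m - i) := by
  have : (0:ℝ) ≤ 1 - p := by linarith
  positivity

private lemma exp_factor_le (p lam : ℝ) (hp0 : 0 ≤ p) (hp1 : p ≤ 1) (m : ℕ) :
    (1 - p + p * Real.exp lam) ^ m ≤ Real.exp (m * (p * lam + lam ^ 2 / 8)) := by
  have hb : (0:ℝ) ≤ 1 - p + p * Real.exp lam := by
    have := (Real.exp_pos lam).le
    nlinarith
  have h1 : 1 - p + p * Real.exp lam ≤ Real.exp (p * lam + lam ^ 2 / 8) :=
    hoeffding_aux p hp0 hp1 lam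
  calc (1 - p + p * Real.exp lam) ^ m ≤ (Real.exp (p * lam + lam ^ 2 / 8)) ^ m :=
        pow_le_pow_left₀ hb h1 m
  _ = Real.exp (m * (p * lam + lam ^ 2 / 8)) := (Real.exp_nat_mul _ m).symm

private lemma tail_upper (m k : ℕ) (p h : ℝ) (hp0 : 0 ≤ p) (hp1 : p ≤ 1)
    (hh : 0 ≤ h) (hk : (m : ℝ) * (p + h) ≤ k) :
    ∑ i ∈ Finset.Icc k m, (m.choose i : ℝ) * p ^ i * (1 - p) ^ (m - i)
      ≤ Real.exp (-(2 * m * h ^ 2)) := by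
  set lam : ℝ := 4 * h with hlam
  have hlam0 : 0 ≤ lam := by positivity
  have step1 : ∑ i ∈ Finset.Icc k m, (m.choose i : ℝ) * p ^ i * (1 - p) ^ (m - i)
      ≤ ∑ i ∈ Finset.Icc k m, (m.choose i : ℝ) * p ^ i * (1 - p) ^ (m - i)
          * Real.exp (lam * ((i : ℝ) - m * (p + h))) := by
    apply Finset.sum_le_sum
    intro i hi
    have hbin := bin_nonneg hp0 hp1 m i
    have hik : (k:ℝ) ≤ (i:ℝ) := by exact_mod_cast (Finset.mem_Icc.1 hi).1
    have hexp : (1:ℝ) ≤ Real.exp (lam * ((i:ℝ) - m * (p + h))) :=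
      Real.one_le_exp (by nlinarith)
    nlinarith [hbin, hexp]
  have step2 : ∑ i ∈ Finset.Icc k m, (m.choose i : ℝ) * p ^ i * (1 - p) ^ (m - i)
          * Real.exp (lam * ((i : ℝ) - m * (p + h)))
      ≤ ∑ i ∈ Finset.range (m + 1), (m.choose i : ℝ) * p ^ i * (1 - p) ^ (m - i)
          * Real.exp (lam * ((i : ℝ) - m * (p + h))) := by
    apply Finset.sum_le_sum_of_subset_of_nonneg
    · intro i hi
      rw [Finset.mem_range]
      exact Nat.lt_succ_of_le (Finset.mem_Icc.1 hi).2
    · intro i _ _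
      exact mul_nonneg (bin_nonneg hp0 hp1 m i) (Real.exp_pos _).le
  have step3 : ∑ i ∈ Finset.range (m + 1), (m.choose i : ℝ) * p ^ i * (1 - p) ^ (m - i)
          * Real.exp (lam * ((i : ℝ) - m * (p + h)))
      = Real.exp (-(lam * (m * (p + h)))) * (1 - p + p * Real.exp lam) ^ m := by
    rw [← binom_mgf p (Real.exp lam) m, Finset.mul_sum]
    apply Finset.sum_congr rfl
    intro i _
    have e1 : Real.exp (lam * ((i : ℝ) - m * (p + h)))
        = Real.exp (-(lam * (m * (p + h)))) * Real.exp lam ^ i := by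
      rw [← Real.exp_nat_mul, ← Real.exp_add]; congr 1; ring
    rw [e1]; ring
  have step4 := exp_factor_le p lam hp0 hp1 m
  have step5 : Real.exp (-(lam * (m * (p + h)))) * (1 - p + p * Real.exp lam) ^ m
      ≤ Real.exp (-(lam * (m * (p + h)))) * Real.exp (m * (p * lam + lam ^ 2 / 8)) :=
    mul_le_mul_of_nonneg_left step4 (Real.exp_pos _).le
  have step6 : Real.exp (-(lam * (m * (p + h)))) * Real.exp (m * (p * lam + lam ^ 2 / 8))
      = Real.exp (-(2 * m * h ^ 2)) := by
    rw [← Real.exp_add]; congr 1; simp only [hlam]; ring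
  linarith [step1, step2, step3.le, step3.ge, step5, step6.le, step6.ge]

private lemma tail_lower (m k : ℕ) (p h : ℝ) (hp0 : 0 ≤ p) (hp1 : p ≤ 1)
    (hh : 0 ≤ h) (hk : (k : ℝ) - 1 ≤ (m : ℝ) * (p - h)) (hkm : k ≤ m + 1) :
    ∑ i ∈ Finset.range k, (m.choose i : ℝ) * p ^ i * (1 - p) ^ (m - i)
      ≤ Real.exp (-(2 * m * h ^ 2)) := by
  set lam : ℝ := 4 * h with hlam
  have hlam0 : 0 ≤ lam := by positivity
  have step1 : ∑ i ∈ Finset.range k, (m.choose i : ℝ) * p ^ i * (1 - p) ^ (m - i)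
      ≤ ∑ i ∈ Finset.range k, (m.choose i : ℝ) * p ^ i * (1 - p) ^ (m - i)
          * Real.exp (lam * (m * (p - h) - (i : ℝ))) := by
    apply Finset.sum_le_sum
    intro i hi
    have hbin := bin_nonneg hp0 hp1 m i
    have hik : (i:ℝ) ≤ (k:ℝ) - 1 := by
      have := Finset.mem_range.1 hi
      have : (i:ℝ) + 1 ≤ (k:ℝ) := by exact_mod_cast this
      linarith
    have hexp : (1:ℝ) ≤ Real.exp (lam * (m * (p - h) - (i:ℝ))) :=
      Real.one_le_exp (by nlinarith)
    nlinarith [hbin, hexp]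
  have step2 : ∑ i ∈ Finset.range k, (m.choose i : ℝ) * p ^ i * (1 - p) ^ (m - i)
          * Real.exp (lam * (m * (p - h) - (i : ℝ)))
      ≤ ∑ i ∈ Finset.range (m + 1), (m.choose i : ℝ) * p ^ i * (1 - p) ^ (m - i)
          * Real.exp (lam * (m * (p - h) - (i : ℝ))) := by
    apply Finset.sum_le_sum_of_subset_of_nonneg
    · exact Finset.range_subset_range.2 hkm
    · intro i _ _
      exact mul_nonneg (bin_nonneg hp0 hp1 m i) (Real.exp_pos _).le
  have step3 : ∑ i ∈ Finset.range (m + 1), (m.choose i : ℝ) * p ^ i * (1 - p) ^ (m - i)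
          * Real.exp (lam * (m * (p - h) - (i : ℝ)))
      = Real.exp (lam * (m * (p - h))) * (1 - p + p * Real.exp (-lam)) ^ m := by
    rw [← binom_mgf p (Real.exp (-lam)) m, Finset.mul_sum]
    apply Finset.sum_congr rfl
    intro i _
    have e1 : Real.exp (lam * (m * (p - h) - (i : ℝ)))
        = Real.exp (lam * (m * (p - h))) * Real.exp (-lam) ^ i := by
      rw [← Real.exp_nat_mul, ← Real.exp_add]; congr 1; ring
    rw [e1]; ring
  have step4 := exp_factor_le p (-lam) hp0 hp1 m
  have step5 : Real.exp (lam * (m * (p - h))) * (1 - p + p * Real.exp (-lam)) ^ m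
      ≤ Real.exp (lam * (m * (p - h))) * Real.exp (m * (p * (-lam) + (-lam) ^ 2 / 8)) :=
    mul_le_mul_of_nonneg_left step4 (Real.exp_pos _).le
  have step6 : Real.exp (lam * (m * (p - h))) * Real.exp (m * (p * (-lam) + (-lam) ^ 2 / 8))
      = Real.exp (-(2 * m * h ^ 2)) := by
    rw [← Real.exp_add]; congr 1; simp only [hlam]; ring
  linarith [step1, step2, step3.le, step5, step6.le]

private lemma icc_compl (p : ℝ) (m k : ℕ) (hkm : k ≤ m + 1) :
    ∑ i ∈ Finset.Icc k m, (m.choose i : ℝ) * p ^ i * (1 - p) ^ (m - i)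
      = 1 - ∑ i ∈ Finset.range k, (m.choose i : ℝ) * p ^ i * (1 - p) ^ (m - i) := by
  have h := Finset.sum_Ico_consecutive
    (fun i => (m.choose i : ℝ) * p ^ i * (1 - p) ^ (m - i)) (Nat.zero_le k) hkm
  rw [← Finset.Ico_add_one_right_eq_Icc, ← Finset.range_eq_Ico] at *
  rw [← Finset.range_eq_Ico] at h
  have h1 := sum_bin_eq_one p m
  rw [← h] at h1
  linarith [h1]

private lemma tail_pos (m k : ℕ) (p : ℝ) (hp0 : 0 < p) (hp1 : p ≤ 1) (hkm : k ≤ m) :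
    0 < ∑ i ∈ Finset.Icc k m, (m.choose i : ℝ) * p ^ i * (1 - p) ^ (m - i) := by
  have hmem : m ∈ Finset.Icc k m := Finset.mem_Icc.2 ⟨hkm, le_refl m⟩
  have hterm : (0:ℝ) < (m.choose m : ℝ) * p ^ m * (1 - p) ^ (m - m) := by
    simp [Nat.choose_self]
    positivity
  calc (0:ℝ) < (m.choose m : ℝ) * p ^ m * (1 - p) ^ (m - m) := hterm
  _ ≤ ∑ i ∈ Finset.Icc k m, (m.choose i : ℝ) * p ^ i * (1 - p) ^ (m - i) :=
    Finset.single_le_sum (fun i _ => bin_nonneg hp0.le hp1 m i) hmem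

private lemma tail_le_one (m k : ℕ) (p : ℝ) (hp0 : 0 ≤ p) (hp1 : p ≤ 1) :
    ∑ i ∈ Finset.Icc k m, (m.choose i : ℝ) * p ^ i * (1 - p) ^ (m - i) ≤ 1 := by
  refine le_trans (Finset.sum_le_sum_of_subset_of_nonneg ?_ ?_)
    (le_of_eq (sum_bin_eq_one p m))
  · intro i hi
    rw [Finset.mem_range]
    exact Nat.lt_succ_of_le (Finset.mem_Icc.1 hi).2
  · intro i _ _
    exact bin_nonneg hp0 hp1 m i

open Finset

private lemma sum_fn_prod {ι κ : Type*} [Fintype ι] [Fintype κ] [DecidableEq ι]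
    (h : ι → κ → ℝ) : ∑ x : ι → κ, ∏ i, h i (x i) = ∏ i, ∑ c, h i c := by
  rw [Finset.prod_univ_sum, Fintype.piFinset_univ]

private lemma prod_pair {α : Type*} [Fintype α] [DecidableEq α] {u v : α} (huv : u ≠ v)
    (G : α → ℝ) (hG : ∀ w, w ≠ u → w ≠ v → G w = 1) : ∏ w, G w = G u * G v := by
  have hv : v ∈ univ.erase u := Finset.mem_erase.2 ⟨Ne.symm huv, mem_univ v⟩
  have h1 : ∏ w, G w = G u * ∏ w ∈ univ.erase u, G w :=
    (Finset.mul_prod_erase univ G (mem_univ u)).symm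
  have h2 : ∏ w ∈ univ.erase u, G w = G v * ∏ w ∈ (univ.erase u).erase v, G w :=
    (Finset.mul_prod_erase _ G hv).symm
  have h3 : ∏ w ∈ (univ.erase u).erase v, G w = 1 := by
    apply Finset.prod_eq_one
    intro w hw
    rw [Finset.mem_erase, Finset.mem_erase] at hw
    exact hG w hw.2.1 hw.1
  rw [h1, h2, h3, mul_one]

private lemma sum_fn_two_point {α κ : Type*} [Fintype α] [Fintype κ] [DecidableEq α]
    [DecidableEq κ] (F : α → κ → ℝ) (hrow : ∀ w, ∑ c, F w c = 1) {u v : α} (huv : u ≠ v)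
    (g : κ → κ → ℝ) :
    ∑ x : α → κ, (∏ w, F w (x w)) * g (x u) (x v)
      = ∑ cu, ∑ cv, F u cu * F v cv * g cu cv := by
  have hg : ∀ x : α → κ,
      g (x u) (x v) = ∑ cu, ∑ cv, (if x u = cu ∧ x v = cv then g cu cv else 0) := by
    intro x
    have hinner : ∀ cu, (∑ cv, if x u = cu ∧ x v = cv then g cu cv else 0)
        = if x u = cu then g cu (x v) else 0 := by
      intro cu
      by_cases h : x u = cu
      · simp only [h, true_and]
        rw [Finset.sum_ite_eq]
        simp
      · simp [h]
    rw [Finset.sum_congr rfl (fun cu _ => hinner cu), Finset.sum_ite_eq]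
    simp
  calc ∑ x : α → κ, (∏ w, F w (x w)) * g (x u) (x v)
      = ∑ x : α → κ, ∑ cu, ∑ cv,
          (∏ w, F w (x w)) * (if x u = cu ∧ x v = cv then g cu cv else 0) := by
        apply Finset.sum_congr rfl; intro x _
        rw [hg x, Finset.mul_sum]
        apply Finset.sum_congr rfl; intro cu _
        rw [Finset.mul_sum]
  _ = ∑ cu, ∑ cv, ∑ x : α → κ,
          (∏ w, F w (x w)) * (if x u = cu ∧ x v = cv then g cu cv else 0) := by
        rw [Finset.sum_comm]
        apply Finset.sum_congr rfl; intro cu _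
        rw [Finset.sum_comm]
  _ = ∑ cu, ∑ cv, F u cu * F v cv * g cu cv := by
    apply Finset.sum_congr rfl; intro cu _
    apply Finset.sum_congr rfl; intro cv _
    have key : ∑ x : α → κ, (∏ w, F w (x w)) * (if x u = cu ∧ x v = cv then 1 else 0)
        = F u cu * F v cv := by
      set H : α → κ → ℝ := fun w c => F w c *
        (if w = u then (if c = cu then 1 else 0) else 1) *
        (if w = v then (if c = cv then 1 else 0) else 1) with hH
      have claim1 : ∀ x : α → κ,
          (∏ w, F w (x w)) * (if x u = cu ∧ x v = cv then 1 else 0)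
            = ∏ w, H w (x w) := by
        intro x
        have e1 : ∏ w, H w (x w) = (∏ w, F w (x w)) *
            (∏ w, (if w = u then (if x w = cu then 1 else 0) else 1)) *
            (∏ w, (if w = v then (if x w = cv then 1 else 0) else 1)) := by
          rw [← Finset.prod_mul_distrib, ← Finset.prod_mul_distrib]
        have e2 : (∏ w, (if w = u then (if x w = cu then (1:ℝ) else 0) else 1))
            = if x u = cu then 1 else 0 := by
          rw [Finset.prod_ite_eq' univ u (fun w => if x w = cu then (1:ℝ) else 0)]
          simp
        have e3 : (∏ w, (if w = v then (if x w = cv then (1:ℝ) else 0) else 1))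
            = if x v = cv then 1 else 0 := by
          rw [Finset.prod_ite_eq' univ v (fun w => if x w = cv then (1:ℝ) else 0)]
          simp
        rw [e1, e2, e3]
        by_cases h1 : x u = cu <;> by_cases h2 : x v = cv <;> simp [h1, h2]
      have claim2 : ∑ x : α → κ, ∏ w, H w (x w) = ∏ w, ∑ c, H w c :=
        sum_fn_prod H
      have claim3 : ∏ w, (∑ c, H w c) = F u cu * F v cv := by
        have hGu : ∑ c, H u c = F u cu := by
          have hc : ∀ c, H u c = if c = cu then F u cu else 0 := by
            intro c
            simp only [hH]
            by_cases h : c = cu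
            · subst h; simp [huv]
            · simp [h, huv]
          rw [Finset.sum_congr rfl (fun c _ => hc c), Finset.sum_ite_eq']
          simp
        have hGv : ∑ c, H v c = F v cv := by
          have hc : ∀ c, H v c = if c = cv then F v cv else 0 := by
            intro c
            simp only [hH]
            by_cases h : c = cv
            · subst h; simp [Ne.symm huv]
            · simp [h, Ne.symm huv]
          rw [Finset.sum_congr rfl (fun c _ => hc c), Finset.sum_ite_eq']
          simp
        have hGw : ∀ w, w ≠ u → w ≠ v → ∑ c, H w c = 1 := by
          intro w hwu hwv
          simp only [hH, if_neg hwu, if_neg hwv, mul_one]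
          exact hrow w
        rw [prod_pair huv (fun w => ∑ c, H w c) hGw, hGu, hGv]
      calc ∑ x : α → κ, (∏ w, F w (x w)) * (if x u = cu ∧ x v = cv then 1 else 0)
          = ∑ x : α → κ, ∏ w, H w (x w) := Finset.sum_congr rfl (fun x _ => claim1 x)
      _ = F u cu * F v cv := claim2.trans claim3
    calc ∑ x : α → κ, (∏ w, F w (x w)) * (if x u = cu ∧ x v = cv then g cu cv else 0)
        = (∑ x : α → κ, (∏ w, F w (x w)) * (if x u = cu ∧ x v = cv then 1 else 0))
            * g cu cv := by
          rw [Finset.sum_mul]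
          apply Finset.sum_congr rfl; intro x _
          by_cases h : x u = cu ∧ x v = cv <;> simp [h]
    _ = F u cu * F v cv * g cu cv := by rw [key]
open Finset in
private lemma mgf_eq {n m s : ℕ} (f : Fin n → Fin m → Fin s → ℝ)
    (hrow : ∀ w q, ∑ c, f w q c = 1) {u v : Fin n} (huv : u ≠ v) (r : ℝ) :
    ∑ ω : Fin n → Fin m → Fin s,
      (∏ w, ∏ q, f w q (ω w q))
        * r ^ ((Finset.univ.filter (fun q => ω u q = ω v q)).card)
      = ∏ q, (1 + (∑ c, f u q c * f v q c) * (r - 1)) := by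
  have stepA : ∀ ω : Fin n → Fin m → Fin s,
      (∏ w, ∏ q, f w q (ω w q))
          * r ^ ((Finset.univ.filter (fun q => ω u q = ω v q)).card)
        = ∏ q, ((∏ w, f w q (ω w q)) * (if ω u q = ω v q then r else 1)) := by
    intro ω
    have e1 : r ^ ((Finset.univ.filter (fun q => ω u q = ω v q)).card)
        = ∏ q, (if ω u q = ω v q then r else 1) := by
      rw [Finset.card_filter, ← Finset.prod_pow_eq_pow_sum]
      apply Finset.prod_congr rfl
      intro q _
      by_cases h : ω u q = ω v q <;> simp [h]
    rw [e1, Finset.prod_comm (s := univ) (t := univ) (f := fun w q => f w q (ω w q)),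
      ← Finset.prod_mul_distrib]
  rw [Finset.sum_congr rfl (fun ω _ => stepA ω)]
  have stepC : ∑ ω : Fin n → Fin m → Fin s,
      ∏ q, ((∏ w, f w q (ω w q)) * (if ω u q = ω v q then r else 1))
      = ∑ σ : Fin m → Fin n → Fin s,
      ∏ q, ((∏ w, f w q (σ q w)) * (if σ q u = σ q v then r else 1)) := by
    apply Fintype.sum_equiv (Equiv.piComm (fun (_ : Fin n) (_ : Fin m) => Fin s))
    intro ω
    rfl
  rw [stepC]
  have stepD := sum_fn_prod (ι := Fin m) (κ := Fin n → Fin s)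
    (fun q col => (∏ w, f w q (col w)) * (if col u = col v then r else 1))
  rw [stepD]
  apply Finset.prod_congr rfl
  intro q _
  have stepE := sum_fn_two_point (fun w c => f w q c) (fun w => hrow w q) huv
    (fun cu cv => if cu = cv then r else 1)
  rw [stepE]
  have e2 : ∀ cu cv : Fin s, f u q cu * f v q cv * (if cu = cv then r else 1)
      = f u q cu * f v q cv + f u q cu * f v q cv * (r - 1) * (if cu = cv then 1 else 0) := by
    intro cu cv
    by_cases h : cu = cv <;> simp [h] <;> ring
  calc ∑ cu, ∑ cv, f u q cu * f v q cv * (if cu = cv then r else 1)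
      = (∑ cu, ∑ cv, f u q cu * f v q cv)
        + (∑ cu, ∑ cv, f u q cu * f v q cv * (r - 1) * (if cu = cv then 1 else 0)) := by
        rw [← Finset.sum_add_distrib]
        apply Finset.sum_congr rfl; intro cu _
        rw [← Finset.sum_add_distrib]
        apply Finset.sum_congr rfl; intro cv _
        exact e2 cu cv
  _ = 1 + (∑ c, f u q c * f v q c) * (r - 1) := by
    congr 1
    · rw [← Finset.sum_mul_sum]
      rw [hrow u q, hrow v q]; norm_num
    · rw [Finset.sum_comm]
      have : ∀ cv : Fin s, (∑ cu, f u q cu * f v q cv * (r - 1) * (if cu = cv then 1 else 0))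
          = f u q cv * f v q cv * (r - 1) := by
        intro cv
        have hterm : ∀ cu : Fin s, f u q cu * f v q cv * (r - 1) * (if cu = cv then 1 else 0)
            = if cu = cv then f u q cv * f v q cv * (r - 1) else 0 := by
          intro cu
          by_cases h : cu = cv
          · subst h; simp
          · simp [h]
        rw [Finset.sum_congr rfl (fun cu _ => hterm cu), Finset.sum_ite_eq']
        simp
      rw [Finset.sum_congr rfl (fun cv _ => this cv), Finset.sum_mul]
open Finset in
private lemma sum_P_one {n m s : ℕ} (f : Fin n → Fin m → Fin s → ℝ)
    (hrow : ∀ w q, ∑ c, f w q c = 1) {u v : Fin n} (huv : u ≠ v) :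
    ∑ ω : Fin n → Fin m → Fin s, (∏ w, ∏ q, f w q (ω w q)) = 1 := by
  have h := mgf_eq f hrow huv 1
  simp only [one_pow, mul_one, sub_self, mul_zero, add_zero, Finset.prod_const_one] at h
  exact h

open Finset in
private lemma chernoff_up {n m s : ℕ} (f : Fin n → Fin m → Fin s → ℝ)
    (hrow : ∀ w q, ∑ c, f w q c = 1) (hnn : ∀ w q c, 0 ≤ f w q c)
    {u v : Fin n} (huv : u ≠ v) (p t : ℝ)
    (hpq : ∀ q : Fin m, (∑ c, f u q c * f v q c) = p) (hp0 : 0 ≤ p) (hp1 : p ≤ 1)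
    (ht : 0 ≤ t) :
    ∑ ω : Fin n → Fin m → Fin s, (∏ w, ∏ q, f w q (ω w q)) *
      (if (m:ℝ)*(p+t) ≤ ((Finset.univ.filter (fun q => ω u q = ω v q)).card : ℝ)
        then 1 else 0)
      ≤ Real.exp (-(2*(m:ℝ)*t^2)) := by
  set lam : ℝ := 4*t with hlam
  have hlam0 : 0 ≤ lam := by positivity
  set C : ℝ := Real.exp (-(lam * ((m:ℝ)*(p+t)))) with hC
  have step1 : ∀ ω : Fin n → Fin m → Fin s,
      (∏ w, ∏ q, f w q (ω w q)) *
        (if (m:ℝ)*(p+t) ≤ ((Finset.univ.filter (fun q => ω u q = ω v q)).card : ℝ)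
          then 1 else 0)
      ≤ (∏ w, ∏ q, f w q (ω w q)) *
        (C * Real.exp lam ^ ((Finset.univ.filter (fun q => ω u q = ω v q)).card)) := by
    intro ω
    set τω := (Finset.univ.filter (fun q => ω u q = ω v q)).card with hτω
    have hP : 0 ≤ ∏ w, ∏ q, f w q (ω w q) :=
      Finset.prod_nonneg fun w _ => Finset.prod_nonneg fun q _ => hnn w q (ω w q)
    have hCr : C * Real.exp lam ^ τω = Real.exp (lam * ((τω : ℝ) - (m:ℝ)*(p+t))) := by
      rw [hC, ← Real.exp_nat_mul, ← Real.exp_add]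
      congr 1; ring
    by_cases h : (m:ℝ)*(p+t) ≤ (τω : ℝ)
    · rw [if_pos h, hCr]
      have : (1:ℝ) ≤ Real.exp (lam * ((τω : ℝ) - (m:ℝ)*(p+t))) :=
        Real.one_le_exp (by nlinarith)
      nlinarith
    · rw [if_neg h, hCr, mul_zero]
      exact mul_nonneg hP (Real.exp_pos _).le
  calc ∑ ω : Fin n → Fin m → Fin s, (∏ w, ∏ q, f w q (ω w q)) *
      (if (m:ℝ)*(p+t) ≤ ((Finset.univ.filter (fun q => ω u q = ω v q)).card : ℝ)
        then 1 else 0)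
      ≤ ∑ ω : Fin n → Fin m → Fin s, (∏ w, ∏ q, f w q (ω w q)) *
          (C * Real.exp lam ^ ((Finset.univ.filter (fun q => ω u q = ω v q)).card)) :=
        Finset.sum_le_sum fun ω _ => step1 ω
  _ = C * ∑ ω : Fin n → Fin m → Fin s, (∏ w, ∏ q, f w q (ω w q)) *
          Real.exp lam ^ ((Finset.univ.filter (fun q => ω u q = ω v q)).card) := by
        rw [Finset.mul_sum]
        apply Finset.sum_congr rfl; intro ω _; ring
  _ = C * (1 - p + p * Real.exp lam) ^ m := by
        rw [mgf_eq f hrow huv (Real.exp lam)]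
        congr 1
        rw [Finset.prod_congr rfl (fun q _ => by rw [hpq q] :
          ∀ q ∈ univ, (1 + (∑ c, f u q c * f v q c) * (Real.exp lam - 1))
            = 1 + p * (Real.exp lam - 1))]
        rw [Finset.prod_const, Finset.card_univ, Fintype.card_fin]
        congr 1; ring
  _ ≤ C * Real.exp ((m:ℝ) * (p * lam + lam^2/8)) := by
        exact mul_le_mul_of_nonneg_left (exp_factor_le p lam hp0 hp1 m)
          (Real.exp_pos _).le
  _ = Real.exp (-(2*(m:ℝ)*t^2)) := by
        rw [hC, ← Real.exp_add]; congr 1; rw [hlam]; ring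

open Finset in
private lemma chernoff_low {n m s : ℕ} (f : Fin n → Fin m → Fin s → ℝ)
    (hrow : ∀ w q, ∑ c, f w q c = 1) (hnn : ∀ w q c, 0 ≤ f w q c)
    {u v : Fin n} (huv : u ≠ v) (p t : ℝ)
    (hpq : ∀ q : Fin m, (∑ c, f u q c * f v q c) = p) (hp0 : 0 ≤ p) (hp1 : p ≤ 1)
    (ht : 0 ≤ t) :
    ∑ ω : Fin n → Fin m → Fin s, (∏ w, ∏ q, f w q (ω w q)) *
      (if ((Finset.univ.filter (fun q => ω u q = ω v q)).card : ℝ) ≤ (m:ℝ)*(p-t)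
        then 1 else 0)
      ≤ Real.exp (-(2*(m:ℝ)*t^2)) := by
  set lam : ℝ := 4*t with hlam
  have hlam0 : 0 ≤ lam := by positivity
  set C : ℝ := Real.exp (lam * ((m:ℝ)*(p-t))) with hC
  have step1 : ∀ ω : Fin n → Fin m → Fin s,
      (∏ w, ∏ q, f w q (ω w q)) *
        (if ((Finset.univ.filter (fun q => ω u q = ω v q)).card : ℝ) ≤ (m:ℝ)*(p-t)
          then 1 else 0)
      ≤ (∏ w, ∏ q, f w q (ω w q)) *
        (C * Real.exp (-lam) ^ ((Finset.univ.filter (fun q => ω u q = ω v q)).card)) := by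
    intro ω
    set τω := (Finset.univ.filter (fun q => ω u q = ω v q)).card with hτω
    have hP : 0 ≤ ∏ w, ∏ q, f w q (ω w q) :=
      Finset.prod_nonneg fun w _ => Finset.prod_nonneg fun q _ => hnn w q (ω w q)
    have hCr : C * Real.exp (-lam) ^ τω = Real.exp (lam * ((m:ℝ)*(p-t) - (τω : ℝ))) := by
      rw [hC, ← Real.exp_nat_mul, ← Real.exp_add]
      congr 1; ring
    by_cases h : (τω : ℝ) ≤ (m:ℝ)*(p-t)
    · rw [if_pos h, hCr]
      have : (1:ℝ) ≤ Real.exp (lam * ((m:ℝ)*(p-t) - (τω : ℝ))) :=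
        Real.one_le_exp (by nlinarith)
      nlinarith
    · rw [if_neg h, hCr, mul_zero]
      exact mul_nonneg hP (Real.exp_pos _).le
  calc ∑ ω : Fin n → Fin m → Fin s, (∏ w, ∏ q, f w q (ω w q)) *
      (if ((Finset.univ.filter (fun q => ω u q = ω v q)).card : ℝ) ≤ (m:ℝ)*(p-t)
        then 1 else 0)
      ≤ ∑ ω : Fin n → Fin m → Fin s, (∏ w, ∏ q, f w q (ω w q)) *
          (C * Real.exp (-lam) ^ ((Finset.univ.filter (fun q => ω u q = ω v q)).card)) :=
        Finset.sum_le_sum fun ω _ => step1 ω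
  _ = C * ∑ ω : Fin n → Fin m → Fin s, (∏ w, ∏ q, f w q (ω w q)) *
          Real.exp (-lam) ^ ((Finset.univ.filter (fun q => ω u q = ω v q)).card) := by
        rw [Finset.mul_sum]
        apply Finset.sum_congr rfl; intro ω _; ring
  _ = C * (1 - p + p * Real.exp (-lam)) ^ m := by
        rw [mgf_eq f hrow huv (Real.exp (-lam))]
        congr 1
        rw [Finset.prod_congr rfl (fun q _ => by rw [hpq q] :
          ∀ q ∈ univ, (1 + (∑ c, f u q c * f v q c) * (Real.exp (-lam) - 1))
            = 1 + p * (Real.exp (-lam) - 1))]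
        rw [Finset.prod_const, Finset.card_univ, Fintype.card_fin]
        congr 1; ring
  _ ≤ C * Real.exp ((m:ℝ) * (p * (-lam) + (-lam)^2/8)) := by
        exact mul_le_mul_of_nonneg_left (exp_factor_le p (-lam) hp0 hp1 m)
          (Real.exp_pos _).le
  _ = Real.exp (-(2*(m:ℝ)*t^2)) := by
        rw [hC, ← Real.exp_add]; congr 1; rw [hlam]; ring
set_option maxHeartbeats 4000000 in
open scoped Classical in
/-- Expert-core correctness: with n workers (a set E of at least two experts answering
correctly with probability p_ex > 1/s, others uniform) answering m questions with s
candidates each, if m ≥ 2n⁴ log(n²/ε)/(p_ex - 1/s)⁴ then with probability at least 1 - ε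
every maximin-weighted-degree subset (expert core) contains only experts. -/
theorem stmt18 (n m s : ℕ) (hs : 2 ≤ s) (hn : 0 < n) (hm : 0 < m)
    (E : Finset (Fin n)) (hE : 2 ≤ E.card)
    (pex ε : ℝ) (hp : 1 / (s : ℝ) < pex) (hp1 : pex ≤ 1) (hε0 : 0 < ε) (hε1 : ε ≤ 1)
    (hmlarge : 2 * (n : ℝ) ^ 4 * Real.log ((n : ℝ) ^ 2 / ε) / (pex - 1 / s) ^ 4 ≤ (m : ℝ))
    (a : Fin m → Fin s)
    (f : Fin n → Fin m → Fin s → ℝ)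
    (hf : ∀ w q c, f w q c =
      if w ∈ E then (if c = a q then pex else (1 - pex) / ((s : ℝ) - 1)) else 1 / (s : ℝ))
    (P : (Fin n → Fin m → Fin s) → ℝ)
    (hP : ∀ ω, P ω = ∏ w : Fin n, ∏ q : Fin m, f w q (ω w q))
    (τ : (Fin n → Fin m → Fin s) → Fin n → Fin n → ℕ)
    (hτ : ∀ ω u v, τ ω u v = (Finset.univ.filter (fun q : Fin m => ω u q = ω v q)).card)
    (pemp : (Fin n → Fin m → Fin s) → ℝ)
    (hpemp : ∀ ω, pemp ω = (∑ q : Fin m,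
        ((Finset.univ.filter
            (fun uv : Fin n × Fin n => uv.1 ≠ uv.2 ∧ ω uv.1 q = ω uv.2 q)).card : ℝ)
          / ((n : ℝ) * ((n : ℝ) - 1))) / (m : ℝ))
    (γ : (Fin n → Fin m → Fin s) → Fin n → Fin n → ℝ)
    (hγ : ∀ ω u v, γ ω u v = -Real.log (∑ i ∈ Finset.Icc (τ ω u v) m,
        (m.choose i : ℝ) * (pemp ω) ^ i * (1 - pemp ω) ^ (m - i)))
    (deg : (Fin n → Fin m → Fin s) → Finset (Fin n) → Fin n → ℝ)
    (hdeg : ∀ ω S u, deg ω S u = ∑ v ∈ S.erase u, γ ω u v) :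
    1 - ε ≤ ∑ ω : Fin n → Fin m → Fin s,
      (if ∀ (Wstar : Finset (Fin n)) (hW : Wstar.Nonempty),
            (∀ (T : Finset (Fin n)) (hT : T.Nonempty),
              T.inf' hT (deg ω T) ≤ Wstar.inf' hW (deg ω Wstar)) →
            Wstar ⊆ E
        then P ω else 0) := by
  classical
  -- §1 numeric setup
  have hn2 : 2 ≤ n := by
    have h1 : E.card ≤ n := by simpa using Finset.card_le_univ E
    omega
  have hnR : (2:ℝ) ≤ (n:ℝ) := by exact_mod_cast hn2
  have hnR0 : (0:ℝ) < (n:ℝ) := by linarith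
  have hsR : (2:ℝ) ≤ (s:ℝ) := by exact_mod_cast hs
  have hs0 : (0:ℝ) < (s:ℝ) := by linarith
  have hs1 : (0:ℝ) < (s:ℝ) - 1 := by linarith
  have hmR : (0:ℝ) < (m:ℝ) := by exact_mod_cast hm
  have hsinv : 0 < 1/(s:ℝ) := by positivity
  have hpex0 : 0 < pex := lt_trans hsinv hp
  have hpex1 : 0 ≤ 1 - pex := by linarith
  set δ : ℝ := pex - 1/(s:ℝ) with hδdef
  have hδ0 : 0 < δ := by simp only [hδdef]; linarith
  have hδ1 : δ ≤ 1 := by simp only [hδdef]; linarith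
  set qee : ℝ := pex^2 + (1-pex)^2/((s:ℝ)-1) with hqeedef
  set Δ : ℝ := qee - 1/(s:ℝ) with hΔdef
  have hΔeq : Δ = δ^2 * (s:ℝ)/((s:ℝ)-1) := by
    simp only [hΔdef, hqeedef, hδdef]
    field_simp
    ring
  have hΔδ : δ^2 ≤ Δ := by
    rw [hΔeq, le_div_iff₀ hs1]
    nlinarith [sq_nonneg δ]
  have hΔ0 : 0 < Δ := lt_of_lt_of_le (by positivity) hΔδ
  have hqee_le : qee ≤ pex := by
    have h0 : 1 ≤ (s:ℝ)*pex := by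
      rw [show (1:ℝ) = (s:ℝ)*(1/(s:ℝ)) by field_simp]
      exact mul_le_mul_of_nonneg_left hp.le hs0.le
    have h1 : (1-pex)/((s:ℝ)-1) ≤ 1/(s:ℝ) := by
      rw [div_le_div_iff₀ hs1 hs0]
      nlinarith
    have h2 : (1-pex)^2/((s:ℝ)-1) = (1-pex) * ((1-pex)/((s:ℝ)-1)) := by
      field_simp
    have h3 : (1-pex) * ((1-pex)/((s:ℝ)-1)) ≤ (1-pex) * pex := by
      apply mul_le_mul_of_nonneg_left _ hpex1
      exact le_trans h1 (le_of_lt hp)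
    simp only [hqeedef]
    nlinarith
  have hΔδ' : Δ ≤ δ := by simp only [hΔdef, hδdef]; linarith
  have hΔ1 : Δ ≤ 1 := le_trans hΔδ' hδ1
  have hqee0 : 0 ≤ qee := by simp only [hqeedef]; positivity
  have hqee1 : qee ≤ 1 := le_trans hqee_le hp1
  have hsinv1 : 1/(s:ℝ) ≤ 1 := by
    rw [div_le_one hs0]; linarith
  set t : ℝ := 5/8 * δ^2/(n:ℝ)^2 with htdef
  have ht0 : 0 < t := by positivity
  set L : ℝ := Real.log ((n:ℝ)^2/ε) with hLdef
  have hlog2lb := Real.log_two_gt_d9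
  have hlog2ub := Real.log_two_lt_d9
  have hεn2 : (0:ℝ) < (n:ℝ)^2/ε := by positivity
  have hL4 : 2*Real.log 2 ≤ L := by
    have h4 : (4:ℝ) ≤ (n:ℝ)^2/ε := by
      rw [le_div_iff₀ hε0]; nlinarith
    have h5 : Real.log 4 ≤ L := by
      rw [hLdef]
      exact Real.log_le_log (by norm_num) h4
    have h6 : Real.log 4 = 2*Real.log 2 := by
      rw [show (4:ℝ) = 2^2 by norm_num, Real.log_pow]
      push_cast; ring
    linarith
  have hLpos : 0 < L := by nlinarith
  have hexpL : Real.exp L = (n:ℝ)^2/ε := by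
    rw [hLdef]; exact Real.exp_log hεn2
  have hlog2L : Real.log 2 ≤ 9/16*L := by linarith
  have hm' : 2*(n:ℝ)^4*L ≤ (m:ℝ)*δ^4 := by
    rw [div_le_iff₀ (by positivity)] at hmlarge
    linarith
  -- §2 f facts
  have hz0 : 0 ≤ (1 - pex)/((s:ℝ)-1) := by positivity
  have hnn : ∀ w q c, 0 ≤ f w q c := by
    intro w q c
    rw [hf]
    by_cases h1 : w ∈ E
    · rw [if_pos h1]
      by_cases h2 : c = a q
      · rw [if_pos h2]; exact hpex0.le
      · rw [if_neg h2]; exact hz0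
    · rw [if_neg h1]; positivity
  have hcards : ((Finset.univ : Finset (Fin s)).card : ℝ) = (s:ℝ) := by
    rw [Finset.card_univ, Fintype.card_fin]
  have hrow : ∀ w q, ∑ c : Fin s, f w q c = 1 := by
    intro w q
    rw [Finset.sum_congr rfl (fun c _ => hf w q c)]
    by_cases h1 : w ∈ E
    · simp only [if_pos h1]
      have : ∀ c : Fin s, (if c = a q then pex else (1 - pex)/((s:ℝ)-1))
          = (1 - pex)/((s:ℝ)-1) + (if c = a q then pex - (1 - pex)/((s:ℝ)-1) else 0) := by
        intro c; by_cases h : c = a q <;> simp [h]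
      rw [Finset.sum_congr rfl (fun c _ => this c), Finset.sum_add_distrib,
        Finset.sum_const, Finset.sum_ite_eq' Finset.univ (a q)]
      simp only [Finset.mem_univ, if_pos, nsmul_eq_mul]
      rw [hcards]
      field_simp
      ring
    · simp only [if_neg h1]
      rw [Finset.sum_const, nsmul_eq_mul, hcards]
      field_simp
  set pq : Fin n → Fin n → ℝ := fun u v => if u ∈ E ∧ v ∈ E then qee else 1/(s:ℝ)
    with hpqdef
  have hpq0 : ∀ u v, 0 ≤ pq u v := by
    intro u v; simp only [hpqdef]
    by_cases h : u ∈ E ∧ v ∈ E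
    · rw [if_pos h]; exact hqee0
    · rw [if_neg h]; positivity
  have hpq1 : ∀ u v, pq u v ≤ 1 := by
    intro u v; simp only [hpqdef]
    by_cases h : u ∈ E ∧ v ∈ E
    · rw [if_pos h]; exact hqee1
    · rw [if_neg h]; exact hsinv1
  have hpairs : ∀ u v : Fin n, ∀ q : Fin m, (∑ c, f u q c * f v q c) = pq u v := by
    intro u v q
    simp only [hpqdef]
    by_cases h : u ∈ E ∧ v ∈ E
    · rw [if_pos h]
      rw [Finset.sum_congr rfl (fun c _ => by rw [hf u q c, hf v q c, if_pos h.1, if_pos h.2])]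
      set z : ℝ := (1 - pex)/((s:ℝ)-1) with hzdef
      have e1 : ∀ c : Fin s, (if c = a q then pex else z) * (if c = a q then pex else z)
          = z*z + (if c = a q then pex*pex - z*z else 0) := by
        intro c; by_cases hc : c = a q <;> simp [hc] <;> ring
      rw [Finset.sum_congr rfl (fun c _ => e1 c), Finset.sum_add_distrib,
        Finset.sum_const, Finset.sum_ite_eq' Finset.univ (a q), nsmul_eq_mul, hcards]
      simp only [Finset.mem_univ, if_pos]
      have hz2 : z*z = (1-pex)^2/((s:ℝ)-1)^2 := by
        rw [hzdef]; field_simp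
      rw [hqeedef, hz2]
      field_simp
      ring
    · rw [if_neg h]
      rcases not_and_or.1 h with h1 | h1
      · rw [Finset.sum_congr rfl (fun c _ => by rw [hf u q c, if_neg h1])]
        rw [← Finset.mul_sum, hrow v q]; ring
      · rw [Finset.sum_congr rfl (fun c _ => by rw [hf v q c, if_neg h1, mul_comm])]
        rw [← Finset.mul_sum, hrow u q]; ring
  have hPnn : ∀ ω, 0 ≤ P ω := by
    intro ω; rw [hP]
    exact Finset.prod_nonneg fun w _ => Finset.prod_nonneg fun q _ => hnn w q (ω w q)
  have hSumP : ∑ ω : Fin n → Fin m → Fin s, P ω = 1 := by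
    obtain ⟨u1, hu1, v1, hv1, huv1⟩ := Finset.one_lt_card.1 (by omega : 1 < E.card)
    rw [Finset.sum_congr rfl (fun ω _ => hP ω)]
    exact sum_P_one f hrow huv1
  -- §3 the good event
  set Gev : (Fin n → Fin m → Fin s) → Prop := fun ω => ∀ u v : Fin n, u ≠ v →
    |((τ ω u v : ℕ):ℝ) - (m:ℝ) * pq u v| ≤ (m:ℝ) * t with hGevdef
  set Pairs : Finset (Fin n × Fin n) := Finset.univ.offDiag with hPairsdef
  have hmemP : ∀ uv : Fin n × Fin n, uv ∈ Pairs ↔ uv.1 ≠ uv.2 := by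
    intro uv; simp [hPairsdef, Finset.mem_offDiag]
  have hbad : ∑ ω : Fin n → Fin m → Fin s, (if ¬ Gev ω then P ω else 0) ≤ ε := by
    have hcher : ∀ uv ∈ Pairs,
        (∑ ω : Fin n → Fin m → Fin s, P ω *
          (if (m:ℝ)*(pq uv.1 uv.2 + t) ≤ ((τ ω uv.1 uv.2 : ℕ):ℝ) then 1 else 0))
        + (∑ ω : Fin n → Fin m → Fin s, P ω *
          (if ((τ ω uv.1 uv.2 : ℕ):ℝ) ≤ (m:ℝ)*(pq uv.1 uv.2 - t) then 1 else 0))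
        ≤ 2 * Real.exp (-(2*(m:ℝ)*t^2)) := by
      intro uv huv
      have huv' : uv.1 ≠ uv.2 := (hmemP uv).1 huv
      have h1 := chernoff_up f hrow hnn huv' (pq uv.1 uv.2) t
        (hpairs uv.1 uv.2) (hpq0 uv.1 uv.2) (hpq1 uv.1 uv.2) ht0.le
      have h2 := chernoff_low f hrow hnn huv' (pq uv.1 uv.2) t
        (hpairs uv.1 uv.2) (hpq0 uv.1 uv.2) (hpq1 uv.1 uv.2) ht0.le
      have e1 : ∑ ω : Fin n → Fin m → Fin s, P ω *
          (if (m:ℝ)*(pq uv.1 uv.2 + t) ≤ ((τ ω uv.1 uv.2 : ℕ):ℝ) then 1 else 0)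
          = ∑ ω : Fin n → Fin m → Fin s, (∏ w, ∏ q, f w q (ω w q)) *
          (if (m:ℝ)*(pq uv.1 uv.2 + t) ≤
            (((Finset.univ.filter (fun q => ω uv.1 q = ω uv.2 q)).card : ℕ):ℝ)
            then 1 else 0) := by
        apply Finset.sum_congr rfl; intro ω _
        rw [hP ω, hτ ω]
      have e2 : ∑ ω : Fin n → Fin m → Fin s, P ω *
          (if ((τ ω uv.1 uv.2 : ℕ):ℝ) ≤ (m:ℝ)*(pq uv.1 uv.2 - t) then 1 else 0)
          = ∑ ω : Fin n → Fin m → Fin s, (∏ w, ∏ q, f w q (ω w q)) *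
          (if (((Finset.univ.filter (fun q => ω uv.1 q = ω uv.2 q)).card : ℕ):ℝ)
            ≤ (m:ℝ)*(pq uv.1 uv.2 - t) then 1 else 0) := by
        apply Finset.sum_congr rfl; intro ω _
        rw [hP ω, hτ ω]
      rw [e1, e2]
      linarith [h1, h2]
    have hind_nn : ∀ (c : Prop) [Decidable c], (0:ℝ) ≤ (if c then 1 else 0) := by
      intro c _; by_cases h : c <;> simp [h]
    have hterm_nn : ∀ ω, ∀ uv ∈ Pairs, (0:ℝ) ≤
        P ω * (if (m:ℝ)*(pq uv.1 uv.2 + t) ≤ ((τ ω uv.1 uv.2 : ℕ):ℝ) then 1 else 0)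
          + P ω * (if ((τ ω uv.1 uv.2 : ℕ):ℝ) ≤ (m:ℝ)*(pq uv.1 uv.2 - t) then 1 else 0) := by
      intro ω uv _
      exact add_nonneg (mul_nonneg (hPnn ω) (hind_nn _)) (mul_nonneg (hPnn ω) (hind_nn _))
    have hpoint : ∀ ω : Fin n → Fin m → Fin s, (if ¬ Gev ω then P ω else 0) ≤
        ∑ uv ∈ Pairs,
          (P ω * (if (m:ℝ)*(pq uv.1 uv.2 + t) ≤ ((τ ω uv.1 uv.2 : ℕ):ℝ) then 1 else 0)
          + P ω * (if ((τ ω uv.1 uv.2 : ℕ):ℝ) ≤ (m:ℝ)*(pq uv.1 uv.2 - t) then 1 else 0)) := by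
      intro ω
      by_cases h : Gev ω
      · rw [if_neg (not_not_intro h)]
        exact Finset.sum_nonneg (hterm_nn ω)
      · rw [if_pos h]
        have h' : ¬ ∀ u v : Fin n, u ≠ v →
            |((τ ω u v : ℕ):ℝ) - (m:ℝ)*pq u v| ≤ (m:ℝ)*t := h
        push_neg at h'
        obtain ⟨u, v, huv, habs⟩ := h'
        have hmem : (u,v) ∈ Pairs := (hmemP (u,v)).2 huv
        have hone : (1:ℝ) ≤
            (if (m:ℝ)*(pq u v + t) ≤ ((τ ω u v : ℕ):ℝ) then 1 else 0)
            + (if ((τ ω u v : ℕ):ℝ) ≤ (m:ℝ)*(pq u v - t) then 1 else 0) := by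
          rcases lt_abs.1 habs with hc | hc
          · rw [if_pos (by linarith : (m:ℝ)*(pq u v + t) ≤ ((τ ω u v : ℕ):ℝ))]
            have := hind_nn (((τ ω u v : ℕ):ℝ) ≤ (m:ℝ)*(pq u v - t))
            linarith
          · rw [if_pos (by linarith : ((τ ω u v : ℕ):ℝ) ≤ (m:ℝ)*(pq u v - t))]
            have := hind_nn ((m:ℝ)*(pq u v + t) ≤ ((τ ω u v : ℕ):ℝ))
            linarith
        calc P ω = P ω * 1 := (mul_one _).symm
        _ ≤ P ω * ((if (m:ℝ)*(pq u v + t) ≤ ((τ ω u v : ℕ):ℝ) then 1 else 0)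
            + (if ((τ ω u v : ℕ):ℝ) ≤ (m:ℝ)*(pq u v - t) then 1 else 0)) :=
          mul_le_mul_of_nonneg_left hone (hPnn ω)
        _ = P ω * (if (m:ℝ)*(pq (u,v).1 (u,v).2 + t) ≤ ((τ ω (u,v).1 (u,v).2 : ℕ):ℝ) then 1 else 0)
            + P ω * (if ((τ ω (u,v).1 (u,v).2 : ℕ):ℝ) ≤ (m:ℝ)*(pq (u,v).1 (u,v).2 - t)
                then 1 else 0) := by ring
        _ ≤ ∑ uv ∈ Pairs,
          (P ω * (if (m:ℝ)*(pq uv.1 uv.2 + t) ≤ ((τ ω uv.1 uv.2 : ℕ):ℝ) then 1 else 0)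
          + P ω * (if ((τ ω uv.1 uv.2 : ℕ):ℝ) ≤ (m:ℝ)*(pq uv.1 uv.2 - t) then 1 else 0)) :=
          Finset.single_le_sum (hterm_nn ω) hmem
    have hchain : ∑ ω : Fin n → Fin m → Fin s, (if ¬ Gev ω then P ω else 0)
        ≤ (Pairs.card : ℝ) * (2 * Real.exp (-(2*(m:ℝ)*t^2))) := by
      calc ∑ ω : Fin n → Fin m → Fin s, (if ¬ Gev ω then P ω else 0)
          ≤ ∑ ω : Fin n → Fin m → Fin s, ∑ uv ∈ Pairs,
            (P ω * (if (m:ℝ)*(pq uv.1 uv.2 + t) ≤ ((τ ω uv.1 uv.2 : ℕ):ℝ) then 1 else 0)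
            + P ω * (if ((τ ω uv.1 uv.2 : ℕ):ℝ) ≤ (m:ℝ)*(pq uv.1 uv.2 - t) then 1 else 0)) :=
          Finset.sum_le_sum (fun ω _ => hpoint ω)
      _ = ∑ uv ∈ Pairs, ∑ ω : Fin n → Fin m → Fin s,
            (P ω * (if (m:ℝ)*(pq uv.1 uv.2 + t) ≤ ((τ ω uv.1 uv.2 : ℕ):ℝ) then 1 else 0)
            + P ω * (if ((τ ω uv.1 uv.2 : ℕ):ℝ) ≤ (m:ℝ)*(pq uv.1 uv.2 - t) then 1 else 0)) :=
          Finset.sum_comm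
      _ ≤ ∑ _uv ∈ Pairs, 2 * Real.exp (-(2*(m:ℝ)*t^2)) := by
          apply Finset.sum_le_sum
          intro uv huv
          rw [Finset.sum_add_distrib]
          exact hcher uv huv
      _ = (Pairs.card : ℝ) * (2 * Real.exp (-(2*(m:ℝ)*t^2))) := by
          rw [Finset.sum_const, nsmul_eq_mul]
    have hcard : (Pairs.card : ℝ) ≤ (n:ℝ)^2 := by
      have h1 : Pairs.card = n*n - n := by
        rw [hPairsdef, Finset.offDiag_card, Finset.card_univ, Fintype.card_fin]
      have h2 : Pairs.card ≤ n*n := by omega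
      calc (Pairs.card : ℝ) ≤ ((n*n : ℕ) : ℝ) := by exact_mod_cast h2
      _ = (n:ℝ)^2 := by push_cast; ring
    have hn4 : (0:ℝ) < (n:ℝ)^4 := by positivity
    have h2mt : L + Real.log 2 ≤ 2*(m:ℝ)*t^2 := by
      have h1 : 2*(m:ℝ)*t^2 * (n:ℝ)^4 = 25/32 * ((m:ℝ)*δ^4) := by
        rw [htdef]; field_simp; ring
      have h3 : (L + Real.log 2) * (n:ℝ)^4 ≤ 2*(m:ℝ)*t^2 * (n:ℝ)^4 := by
        rw [h1]
        have hA : (L + Real.log 2) ≤ 25/16*L := by linarith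
        have hB : (L + Real.log 2)*(n:ℝ)^4 ≤ 25/16*L*(n:ℝ)^4 :=
          mul_le_mul_of_nonneg_right hA hn4.le
        have hC : 25/16*L*(n:ℝ)^4 = 25/32*(2*(n:ℝ)^4*L) := by ring
        have hD : 25/32*(2*(n:ℝ)^4*L) ≤ 25/32*((m:ℝ)*δ^4) :=
          mul_le_mul_of_nonneg_left hm' (by norm_num : (0:ℝ) ≤ 25/32)
        exact le_trans hB (le_trans (le_of_eq hC) hD)
      exact le_of_mul_le_mul_right h3 hn4
    have hexpbound : Real.exp (-(2*(m:ℝ)*t^2)) ≤ ε/(2*(n:ℝ)^2) := by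
      have h1 : Real.exp (-(2*(m:ℝ)*t^2)) ≤ Real.exp (-(L + Real.log 2)) :=
        Real.exp_le_exp.2 (by linarith)
      have h2 : Real.exp (-(L + Real.log 2)) = ε/(2*(n:ℝ)^2) := by
        rw [neg_add, Real.exp_add, Real.exp_neg, Real.exp_neg, hexpL, Real.exp_log two_pos,
          inv_div]
        ring
      linarith
    calc ∑ ω : Fin n → Fin m → Fin s, (if ¬ Gev ω then P ω else 0)
        ≤ (Pairs.card : ℝ) * (2 * Real.exp (-(2*(m:ℝ)*t^2))) := hchain
    _ ≤ (n:ℝ)^2 * (2 * (ε/(2*(n:ℝ)^2))) := by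
        apply mul_le_mul hcard _ (by positivity) (by positivity)
        linarith
    _ = ε := by field_simp

  have hdet : ∀ ω : Fin n → Fin m → Fin s, Gev ω →
      ∀ (Wstar : Finset (Fin n)) (hW : Wstar.Nonempty),
        (∀ (T : Finset (Fin n)) (hT : T.Nonempty),
          T.inf' hT (deg ω T) ≤ Wstar.inf' hW (deg ω Wstar)) →
        Wstar ⊆ E := by
    intro ω hGω
    by_cases hEU : E = Finset.univ
    · intro Wstar _ _
      rw [hEU]; exact Finset.subset_univ Wstar
    intro Wstar hW hmax
    have hG' : ∀ u v : Fin n, u ≠ v →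
        |((τ ω u v : ℕ):ℝ) - (m:ℝ) * pq u v| ≤ (m:ℝ) * t := hGω
    have hGev' : ∀ u v : Fin n, u ≠ v →
        (m:ℝ)*(pq u v - t) ≤ ((τ ω u v : ℕ):ℝ)
          ∧ ((τ ω u v:ℕ):ℝ) ≤ (m:ℝ)*(pq u v + t) := by
      intro u v huv
      have h := abs_le.1 (hG' u v huv)
      constructor
      · have := h.1; linarith
      · have := h.2; linarith
    have hτm : ∀ u v, τ ω u v ≤ m := by
      intro u v; rw [hτ]
      calc (Finset.filter (fun q => ω u q = ω v q) Finset.univ).card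
          ≤ (Finset.univ : Finset (Fin m)).card := Finset.card_filter_le _ _
      _ = m := by rw [Finset.card_univ, Fintype.card_fin]
    have hτmR : ∀ u v, ((τ ω u v : ℕ):ℝ) ≤ (m:ℝ) := by
      intro u v; exact_mod_cast hτm u v
    -- pemp as average of τ over Pairs
    set NN : ℝ := (n:ℝ)*((n:ℝ)-1) with hNNdef
    have hNN0 : (0:ℝ) < NN := by
      rw [hNNdef]
      exact mul_pos (by linarith) (by linarith)
    have hNNn2 : NN ≤ (n:ℝ)^2 := by
      rw [hNNdef]
      have e : (n:ℝ)*((n:ℝ)-1) = (n:ℝ)^2 - (n:ℝ) := by ring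
      linarith
    set Tsum : ℝ := ∑ uv ∈ Pairs, ((τ ω uv.1 uv.2 : ℕ):ℝ) with hTsumdef
    have hcnt : ∀ q : Fin m,
        (((Finset.univ.filter
            (fun uv : Fin n × Fin n => uv.1 ≠ uv.2 ∧ ω uv.1 q = ω uv.2 q)).card : ℕ):ℝ)
        = ∑ uv : Fin n × Fin n,
            (if uv.1 ≠ uv.2 ∧ ω uv.1 q = ω uv.2 q then (1:ℝ) else 0) := by
      intro q
      rw [Finset.card_filter]
      push_cast
      apply Finset.sum_congr rfl; intro uv _
      by_cases h : uv.1 ≠ uv.2 ∧ ω uv.1 q = ω uv.2 q <;> simp [h]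
    have hswap : ∑ q : Fin m, (((Finset.univ.filter
            (fun uv : Fin n × Fin n => uv.1 ≠ uv.2 ∧ ω uv.1 q = ω uv.2 q)).card : ℕ):ℝ)
        = Tsum := by
      rw [Finset.sum_congr rfl (fun q _ => hcnt q), Finset.sum_comm]
      have h1 : ∀ uv : Fin n × Fin n,
          (∑ q : Fin m, if uv.1 ≠ uv.2 ∧ ω uv.1 q = ω uv.2 q then (1:ℝ) else 0)
          = if uv.1 ≠ uv.2 then ((τ ω uv.1 uv.2 : ℕ):ℝ) else 0 := by
        intro uv
        by_cases h : uv.1 ≠ uv.2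
        · rw [if_pos h, hτ, Finset.card_filter]
          push_cast
          apply Finset.sum_congr rfl; intro q _
          by_cases h2 : ω uv.1 q = ω uv.2 q <;> simp [h, h2]
        · rw [if_neg h]
          apply Finset.sum_eq_zero; intro q _
          rw [if_neg (by tauto)]
      rw [Finset.sum_congr rfl (fun uv _ => h1 uv), ← Finset.sum_filter]
      have h2 : Finset.univ.filter (fun uv : Fin n × Fin n => uv.1 ≠ uv.2) = Pairs := by
        ext uv; simp only [Finset.mem_filter, Finset.mem_univ, true_and, hmemP uv]
      rw [hTsumdef, h2]
    have hpeeq : pemp ω = Tsum / (NN * m) := by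
      rw [hpemp ω, ← Finset.sum_div, hswap, div_div]
    have hcardP : (Pairs.card : ℝ) = NN := by
      have h1 : Pairs.card = n*n - n := by
        rw [hPairsdef, Finset.offDiag_card, Finset.card_univ, Fintype.card_fin]
      rw [h1, Nat.cast_sub (Nat.le_mul_of_pos_left n hn), hNNdef]
      push_cast; ring
    -- sum of pq over Pairs
    set kR : ℝ := (E.card : ℝ) with hkRdef
    have hkR2 : (2:ℝ) ≤ kR := by rw [hkRdef]; exact_mod_cast hE
    have hkRn : kR ≤ (n:ℝ) - 1 := by
      have h1 : E.card < n := by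
        have h2 := Finset.card_lt_card (Finset.ssubset_univ_iff.2 hEU)
        simpa using h2
      have h3 : E.card + 1 ≤ n := h1
      have h4 : (E.card : ℝ) + 1 ≤ (n:ℝ) := by exact_mod_cast h3
      rw [hkRdef]; linarith
    set K : ℝ := kR^2 - kR with hKdef
    have hK2 : (2:ℝ) ≤ K := by
      rw [hKdef]
      have h1 : (2:ℝ)*1 ≤ kR*(kR-1) :=
        mul_le_mul hkR2 (by linarith) (by norm_num) (by linarith)
      have e : kR*(kR-1) = kR^2 - kR := by ring
      linarith
    have hKub : K ≤ ((n:ℝ)-1)*((n:ℝ)-2) := by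
      rw [hKdef]
      have h1 : kR*(kR-1) ≤ ((n:ℝ)-1)*((n:ℝ)-2) :=
        mul_le_mul hkRn (by linarith) (by linarith) (by linarith)
      have e : kR*(kR-1) = kR^2 - kR := by ring
      linarith
    have hEEsub : E.offDiag ⊆ Pairs := by
      intro uv huv
      rw [Finset.mem_offDiag] at huv
      exact (hmemP uv).2 huv.2.2
    have hEEcard : ((E.offDiag.card : ℕ):ℝ) = K := by
      rw [Finset.offDiag_card, Nat.cast_sub (Nat.le_mul_of_pos_left E.card
        (by omega : 0 < E.card)), hKdef, hkRdef]
      push_cast; ring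
    have hQs : ∑ uv ∈ Pairs, pq uv.1 uv.2 = NN*(1/(s:ℝ)) + K*Δ := by
      rw [← Finset.sum_sdiff hEEsub]
      have h1 : ∑ uv ∈ E.offDiag, pq uv.1 uv.2 = K * qee := by
        rw [Finset.sum_congr rfl (fun uv huv => by
          rw [Finset.mem_offDiag] at huv
          simp only [hpqdef]
          rw [if_pos ⟨huv.1, huv.2.1⟩] : ∀ uv ∈ E.offDiag, pq uv.1 uv.2 = qee)]
        rw [Finset.sum_const, nsmul_eq_mul, hEEcard]
      have h2 : ∑ uv ∈ Pairs \ E.offDiag, pq uv.1 uv.2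
          = (NN - K) * (1/(s:ℝ)) := by
        rw [Finset.sum_congr rfl (fun uv huv => by
          rw [Finset.mem_sdiff] at huv
          simp only [hpqdef]
          rw [if_neg (fun hc => huv.2 (Finset.mem_offDiag.2
            ⟨hc.1, hc.2, (hmemP uv).1 huv.1⟩))] : ∀ uv ∈ Pairs \ E.offDiag,
            pq uv.1 uv.2 = 1/(s:ℝ))]
        rw [Finset.sum_const, nsmul_eq_mul, Finset.card_sdiff_of_subset hEEsub]
        rw [Nat.cast_sub (Finset.card_le_card hEEsub), hcardP, hEEcard]
      rw [h1, h2]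
      have hq : qee = 1/(s:ℝ) + Δ := by rw [hΔdef]; ring
      rw [hq]; ring
    -- Tsum bounds
    have hTlb : (m:ℝ)*(NN*(1/(s:ℝ)) + K*Δ - NN*t) ≤ Tsum := by
      have h1 : ∑ uv ∈ Pairs, ((m:ℝ)*(pq uv.1 uv.2 - t)) ≤ Tsum := by
        rw [hTsumdef]
        apply Finset.sum_le_sum
        intro uv huv
        exact (hGev' uv.1 uv.2 ((hmemP uv).1 huv)).1
      have h2 : ∑ uv ∈ Pairs, ((m:ℝ)*(pq uv.1 uv.2 - t))
          = (m:ℝ)*(∑ uv ∈ Pairs, pq uv.1 uv.2) - (m:ℝ)*((Pairs.card : ℝ)*t) := by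
        rw [← Finset.mul_sum]
        rw [Finset.sum_sub_distrib, Finset.sum_const, nsmul_eq_mul]
        ring
      rw [h2, hQs, hcardP] at h1
      linarith
    have hTub : Tsum ≤ (m:ℝ)*(NN*(1/(s:ℝ)) + K*Δ + NN*t) := by
      have h1 : Tsum ≤ ∑ uv ∈ Pairs, ((m:ℝ)*(pq uv.1 uv.2 + t)) := by
        rw [hTsumdef]
        apply Finset.sum_le_sum
        intro uv huv
        exact (hGev' uv.1 uv.2 ((hmemP uv).1 huv)).2
      have h2 : ∑ uv ∈ Pairs, ((m:ℝ)*(pq uv.1 uv.2 + t))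
          = (m:ℝ)*(∑ uv ∈ Pairs, pq uv.1 uv.2) + (m:ℝ)*((Pairs.card : ℝ)*t) := by
        rw [← Finset.mul_sum]
        rw [Finset.sum_add_distrib, Finset.sum_const, nsmul_eq_mul]
        ring
      rw [h2, hQs, hcardP] at h1
      linarith
    have hNm0 : (0:ℝ) < NN*(m:ℝ) := by positivity
    have hpelbK : 1/(s:ℝ) + K*Δ/NN - t ≤ pemp ω := by
      rw [hpeeq, le_div_iff₀ hNm0]
      have e : (1/(s:ℝ) + K*Δ/NN - t)*(NN*(m:ℝ))
          = (m:ℝ)*(NN*(1/(s:ℝ)) + K*Δ - NN*t) := by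
        field_simp
      rw [e]; exact hTlb
    have hpeubK : pemp ω ≤ 1/(s:ℝ) + K*Δ/NN + t := by
      rw [hpeeq, div_le_iff₀ hNm0]
      have e : (1/(s:ℝ) + K*Δ/NN + t)*(NN*(m:ℝ))
          = (m:ℝ)*(NN*(1/(s:ℝ)) + K*Δ + NN*t) := by
        field_simp
      rw [e]; exact hTub
    have hKΔlb : 2*Δ/(n:ℝ)^2 ≤ K*Δ/NN := by
      have h1 : 2*Δ/(n:ℝ)^2 ≤ 2*Δ/NN := by
        apply div_le_div_of_nonneg_left (by linarith [hΔ0]) hNN0 hNNn2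
      have h2 : 2*Δ/NN ≤ K*Δ/NN := by
        apply div_le_div_of_nonneg_right _ hNN0.le
        exact mul_le_mul_of_nonneg_right hK2 hΔ0.le
      linarith
    have hKΔub : K*Δ/NN ≤ Δ*(1 - 2/(n:ℝ)) := by
      have h1 : K*Δ/NN ≤ ((n:ℝ)-1)*((n:ℝ)-2)*Δ/NN := by
        apply div_le_div_of_nonneg_right _ hNN0.le
        exact mul_le_mul_of_nonneg_right hKub hΔ0.le
      have h2 : ((n:ℝ)-1)*((n:ℝ)-2)*Δ/NN = Δ*(1 - 2/(n:ℝ)) := by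
        rw [hNNdef]
        have hn1 : (n:ℝ)-1 ≠ 0 := by linarith
        have hn0 : (n:ℝ) ≠ 0 := by linarith
        field_simp
      linarith
    have hpelb2 : 1/(s:ℝ) + 2*Δ/(n:ℝ)^2 - t ≤ pemp ω := by linarith
    have hpeub2 : pemp ω ≤ 1/(s:ℝ) + Δ*(1 - 2/(n:ℝ)) + t := by linarith
    have htΔ : t ≤ 5/8*Δ/(n:ℝ)^2 := by
      rw [htdef]
      apply div_le_div_of_nonneg_right _ (by positivity)
      exact mul_le_mul_of_nonneg_left hΔδ (by norm_num)
    have hpe0 : (0:ℝ) < pemp ω := by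
      have h1 : 5/8*Δ/(n:ℝ)^2 ≤ 2*Δ/(n:ℝ)^2 := by
        apply div_le_div_of_nonneg_right _ (by positivity)
        exact mul_le_mul_of_nonneg_right (by norm_num : (5:ℝ)/8 ≤ 2) hΔ0.le
      linarith [hpelb2, hsinv, htΔ, h1]
    have hpe1 : pemp ω ≤ 1 := by
      rw [hpeeq, div_le_one hNm0]
      have h1 : Tsum ≤ ∑ _uv ∈ Pairs, (m:ℝ) := by
        rw [hTsumdef]
        exact Finset.sum_le_sum (fun uv _ => hτmR uv.1 uv.2)
      rw [Finset.sum_const, nsmul_eq_mul, hcardP] at h1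
      linarith
    -- gamma bounds
    have hn4 : (0:ℝ) < (n:ℝ)^4 := by positivity
    have hγ0 : ∀ u v : Fin n, 0 ≤ γ ω u v := by
      intro u v
      rw [hγ ω u v]
      have h1 := tail_le_one m (τ ω u v) (pemp ω) hpe0.le hpe1
      have h2 : (0:ℝ) ≤ ∑ i ∈ Finset.Icc (τ ω u v) m,
          (m.choose i : ℝ) * (pemp ω)^i * (1-pemp ω)^(m-i) :=
        Finset.sum_nonneg (fun i _ => bin_nonneg hpe0.le hpe1 m i)
      have h3 := Real.log_nonpos h2 h1
      linarith
    have hγne : ∀ u v : Fin n, u ≠ v → (u ∉ E ∨ v ∉ E) → γ ω u v ≤ Real.log 2 := by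
      intro u v huv hne
      have hpquv : pq u v = 1/(s:ℝ) := by
        simp only [hpqdef]; rw [if_neg (by tauto)]
      have hub := (hGev' u v huv).2
      rw [hpquv] at hub
      set u₀ : ℝ := 3/4*δ^2/(n:ℝ)^2 with hu₀def
      have hu₀0 : (0:ℝ) ≤ u₀ := by rw [hu₀def]; positivity
      have h1 : u₀ + 2*t ≤ 2*Δ/(n:ℝ)^2 := by
        have e : u₀ + 2*t = 2*δ^2/(n:ℝ)^2 := by rw [hu₀def, htdef]; ring
        rw [e]
        apply div_le_div_of_nonneg_right _ (by positivity)
        linarith [hΔδ]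
      have hsep : ((τ ω u v : ℕ):ℝ) - 1 ≤ (m:ℝ)*(pemp ω - u₀) := by
        have h2 : 1/(s:ℝ) + t ≤ pemp ω - u₀ := by linarith [hpelb2]
        have h3 := mul_le_mul_of_nonneg_left h2 hmR.le
        linarith [hub]
      have hlow := tail_lower m (τ ω u v) (pemp ω) u₀ hpe0.le hpe1 hu₀0 hsep
        (le_trans (hτm u v) (Nat.le_succ m))
      have hexp : Real.exp (-(2*(m:ℝ)*u₀^2)) ≤ 1/2 := by
        have e0 : (1:ℝ)/2 = Real.exp (-(Real.log 2)) := by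
          rw [Real.exp_neg, Real.exp_log two_pos]; norm_num
        rw [e0]
        apply Real.exp_le_exp.2
        apply neg_le_neg
        have e : 2*(m:ℝ)*u₀^2*(n:ℝ)^4 = 9/8*((m:ℝ)*δ^4) := by
          rw [hu₀def]; field_simp; ring
        have h4 : Real.log 2 * (n:ℝ)^4 ≤ 2*(m:ℝ)*u₀^2*(n:ℝ)^4 := by
          rw [e]
          have h5 : Real.log 2 * (n:ℝ)^4 ≤ 9/16*L*(n:ℝ)^4 :=
            mul_le_mul_of_nonneg_right hlog2L hn4.le
          have h6 : 9/16*L*(n:ℝ)^4 = 9/32*(2*(n:ℝ)^4*L) := by ring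
          have h7 : 9/32*(2*(n:ℝ)^4*L) ≤ 9/32*((m:ℝ)*δ^4) :=
            mul_le_mul_of_nonneg_left hm' (by norm_num)
          have h8 : 9/32*((m:ℝ)*δ^4) ≤ 9/8*((m:ℝ)*δ^4) :=
            mul_le_mul_of_nonneg_right (by norm_num : (9:ℝ)/32 ≤ 9/8)
              (by positivity : (0:ℝ) ≤ (m:ℝ)*δ^4)
          linarith
        exact le_of_mul_le_mul_right h4 hn4
      have htail : 1/2 ≤ ∑ i ∈ Finset.Icc (τ ω u v) m,
          (m.choose i : ℝ) * (pemp ω)^i * (1-pemp ω)^(m-i) := by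
        rw [icc_compl (pemp ω) m (τ ω u v) (le_trans (hτm u v) (Nat.le_succ m))]
        linarith [hlow, hexp]
      rw [hγ ω u v]
      have hlog : Real.log (1/2) ≤ Real.log (∑ i ∈ Finset.Icc (τ ω u v) m,
          (m.choose i : ℝ) * (pemp ω)^i * (1-pemp ω)^(m-i)) :=
        Real.log_le_log (by norm_num) htail
      have e1 : Real.log ((1:ℝ)/2) = -Real.log 2 := by
        rw [one_div, Real.log_inv]
      linarith [hlog, e1.le, e1.ge]
    have hγee : ∀ u v : Fin n, u ≠ v → u ∈ E → v ∈ E → 4*(n:ℝ)^2*L ≤ γ ω u v := by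
      intro u v huv hu hv
      have hpquv : pq u v = qee := by
        simp only [hpqdef]; rw [if_pos ⟨hu, hv⟩]
      have hlb := (hGev' u v huv).1
      rw [hpquv] at hlb
      set g₀ : ℝ := δ^2/(n:ℝ) with hg₀def
      have hg₀0 : (0:ℝ) ≤ g₀ := by rw [hg₀def]; positivity
      have h1 : g₀ + 2*t ≤ 2*Δ/(n:ℝ) := by
        have e1 : 2*t = 5/4*δ^2/(n:ℝ)^2 := by rw [htdef]; ring
        have e2 : 5/4*δ^2/(n:ℝ)^2 ≤ 5/8*δ^2/(n:ℝ) := by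
          rw [div_le_div_iff₀ (by positivity) (by positivity)]
          have hsq : 2*(n:ℝ) ≤ (n:ℝ)^2 := by
            have := mul_le_mul_of_nonneg_right hnR (by linarith : (0:ℝ) ≤ (n:ℝ))
            have e : (n:ℝ)*(n:ℝ) = (n:ℝ)^2 := by ring
            linarith
          have hp1 := mul_le_mul_of_nonneg_left hsq
            (by positivity : (0:ℝ) ≤ 5/8*δ^2)
          have e6 : 5/4*δ^2*(n:ℝ) = 5/8*δ^2*(2*(n:ℝ)) := by ring
          linarith
        have e3 : g₀ + 5/8*δ^2/(n:ℝ) = (13/8*δ^2)/(n:ℝ) := by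
          rw [hg₀def]; field_simp; ring
        have e4 : (13/8*δ^2)/(n:ℝ) ≤ 2*Δ/(n:ℝ) := by
          apply div_le_div_of_nonneg_right _ (by positivity)
          calc (13:ℝ)/8*δ^2 ≤ 13/8*Δ :=
            mul_le_mul_of_nonneg_left hΔδ (by norm_num)
          _ = 2*Δ - 3/8*Δ := by ring
          _ ≤ 2*Δ := sub_le_self _ (mul_nonneg (by norm_num) hΔ0.le)
        calc g₀ + 2*t = g₀ + 5/4*δ^2/(n:ℝ)^2 := by rw [e1]
        _ ≤ g₀ + 5/8*δ^2/(n:ℝ) := by linarith [e2]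
        _ = (13/8*δ^2)/(n:ℝ) := e3
        _ ≤ 2*Δ/(n:ℝ) := e4
      have h2 : pemp ω + g₀ ≤ qee - t := by
        have hq : qee = 1/(s:ℝ) + Δ := by rw [hΔdef]; ring
        have e5 : Δ - Δ*(1 - 2/(n:ℝ)) = 2*Δ/(n:ℝ) := by
          field_simp; ring
        have := hpeub2
        rw [hq]
        linarith [h1, e5.le, e5.ge]
      have hsep : (m:ℝ)*(pemp ω + g₀) ≤ ((τ ω u v : ℕ):ℝ) := by
        have h3 := mul_le_mul_of_nonneg_left h2 hmR.le
        linarith [hlb]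
      have hup := tail_upper m (τ ω u v) (pemp ω) g₀ hpe0.le hpe1 hg₀0 hsep
      have hpos := tail_pos m (τ ω u v) (pemp ω) hpe0 hpe1 (hτm u v)
      rw [hγ ω u v]
      have hlog : Real.log (∑ i ∈ Finset.Icc (τ ω u v) m,
          (m.choose i : ℝ) * (pemp ω)^i * (1-pemp ω)^(m-i)) ≤ -(2*(m:ℝ)*g₀^2) :=
        (Real.log_le_iff_le_exp hpos).2 hup
      have hnum : 4*(n:ℝ)^2*L ≤ 2*(m:ℝ)*g₀^2 := by
        have hn2' : (0:ℝ) < (n:ℝ)^2 := by positivity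
        have e : 2*(m:ℝ)*g₀^2*(n:ℝ)^2 = 2*((m:ℝ)*δ^4) := by
          rw [hg₀def]; field_simp
        have h4 : 4*(n:ℝ)^2*L*(n:ℝ)^2 ≤ 2*(m:ℝ)*g₀^2*(n:ℝ)^2 := by
          rw [e]
          have h5 : 4*(n:ℝ)^2*L*(n:ℝ)^2 = 2*(2*(n:ℝ)^4*L) := by ring
          have h6 : 2*(2*(n:ℝ)^4*L) ≤ 2*((m:ℝ)*δ^4) :=
            mul_le_mul_of_nonneg_left hm' (by norm_num)
          linarith
        exact le_of_mul_le_mul_right h4 hn2'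
      linarith
    -- final contradiction
    by_contra hns
    obtain ⟨u0, hu0W, hu0E⟩ : ∃ u0 ∈ Wstar, u0 ∉ E := by
      by_contra hc; push_neg at hc; exact hns (fun x hx => hc x hx)
    have hEne : E.Nonempty := Finset.card_pos.1 (by omega)
    have hA : 4*(n:ℝ)^2*L ≤ E.inf' hEne (deg ω E) := by
      apply Finset.le_inf'
      intro u hu
      rw [hdeg]
      obtain ⟨v1, hv1⟩ : (E.erase u).Nonempty := by
        rw [← Finset.card_pos, Finset.card_erase_of_mem hu]; omega
      have hv1E : v1 ∈ E := Finset.mem_of_mem_erase hv1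
      have hv1u : v1 ≠ u := Finset.ne_of_mem_erase hv1
      calc 4*(n:ℝ)^2*L ≤ γ ω u v1 := hγee u v1 (Ne.symm hv1u) hu hv1E
      _ ≤ ∑ v ∈ E.erase u, γ ω u v :=
        Finset.single_le_sum (fun v _ => hγ0 u v) hv1
    have hB : Wstar.inf' hW (deg ω Wstar) ≤ ((n:ℝ)-1) * Real.log 2 := by
      calc Wstar.inf' hW (deg ω Wstar) ≤ deg ω Wstar u0 := Finset.inf'_le _ hu0W
      _ = ∑ v ∈ Wstar.erase u0, γ ω u0 v := hdeg ω Wstar u0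
      _ ≤ (Wstar.erase u0).card • Real.log 2 :=
        Finset.sum_le_card_nsmul _ _ _
          (fun v hv => hγne u0 v (Ne.symm (Finset.ne_of_mem_erase hv)) (Or.inl hu0E))
      _ = ((Wstar.erase u0).card : ℝ) * Real.log 2 := nsmul_eq_mul _ _
      _ ≤ ((n:ℝ)-1) * Real.log 2 := by
          apply mul_le_mul_of_nonneg_right _ (by linarith [hlog2lb] : (0:ℝ) ≤ Real.log 2)
          have h1 : (Wstar.erase u0).card ≤ n - 1 := by
            have h2 := Finset.card_erase_of_mem hu0W
            have h3 : Wstar.card ≤ n := by simpa using Finset.card_le_univ Wstar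
            omega
          have h4 : ((Wstar.erase u0).card : ℝ) ≤ ((n-1 : ℕ):ℝ) := by exact_mod_cast h1
          have h5 : ((n-1:ℕ):ℝ) = (n:ℝ)-1 := by
            rw [Nat.cast_sub (by omega : 1 ≤ n)]; norm_num
          linarith
    have hAB : 4*(n:ℝ)^2*L ≤ ((n:ℝ)-1)*Real.log 2 :=
      le_trans hA (le_trans (hmax E hEne) hB)
    have hL1 : (1:ℝ) ≤ L := by linarith
    have c1 : ((n:ℝ)-1)*Real.log 2 ≤ (n:ℝ)-1 := by
      have := mul_le_mul_of_nonneg_left (by linarith : Real.log 2 ≤ 1)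
        (by linarith : (0:ℝ) ≤ (n:ℝ)-1)
      linarith
    have c2 : 4*(n:ℝ)^2 ≤ 4*(n:ℝ)^2*L := by
      have h0 : (0:ℝ) ≤ 4*(n:ℝ)^2 := by positivity
      have := mul_le_mul_of_nonneg_left hL1 h0
      linarith
    have c3 : (n:ℝ) ≤ (n:ℝ)^2 := by
      have := mul_le_mul_of_nonneg_right hnR (by linarith : (0:ℝ) ≤ (n:ℝ))
      have e : (n:ℝ)*(n:ℝ) = (n:ℝ)^2 := by ring
      linarith
    linarith

  have hgood : 1 - ε ≤ ∑ ω : Fin n → Fin m → Fin s, (if Gev ω then P ω else 0) := by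
    have hsplit : ∑ ω : Fin n → Fin m → Fin s, (if Gev ω then P ω else 0)
        + ∑ ω : Fin n → Fin m → Fin s, (if ¬ Gev ω then P ω else 0) = 1 := by
      rw [← Finset.sum_add_distrib, ← hSumP]
      apply Finset.sum_congr rfl; intro ω _
      by_cases h : Gev ω
      · rw [if_pos h, if_neg (not_not_intro h), add_zero]
      · rw [if_neg h, if_pos h, zero_add]
    linarith
  refine le_trans hgood (Finset.sum_le_sum fun ω _ => ?_)
  by_cases h : Gev ω
  · rw [if_pos h, if_pos (hdet ω h)]
  · rw [if_neg h]
    by_cases h2 : (∀ (Wstar : Finset (Fin n)) (hW : Wstar.Nonempty),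
        (∀ (T : Finset (Fin n)) (hT : T.Nonempty),
          T.inf' hT (deg ω T) ≤ Wstar.inf' hW (deg ω Wstar)) → Wstar ⊆ E)
    · rw [if_pos h2]; exact hPnn ω
    · rw [if_neg h2]
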